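/- arXiv:1301.6652 — 2 statements merged into one kernel-verified Lean document; each statement's English description precedes it below -/
import Mathlib

section
/- For a finite poset X, the category of left modules over the incidence algebra ℤX is equivalent to the category of functors from X^op (the opposite poset viewed as a category) to abelian groups. -/
open CategoryTheory Opposite Finset

namespace Stmt9Aux

variable {X : Type} [Fintype X] [PartialOrder X] [DecidableEq X] [LocallyFiniteOrder X]

/-- decidability of `≤` from local finiteness -/
def decLE : DecidableRel ((· ≤ ·) : X → X → Prop) := fun a b =>
  decidable_of_iff (b ∈ Finset.Icc a b) (by simp)

attribute [local instance] decLE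

local notation "A" => IncidenceAlgebra ℤ X

/-- Matrix-unit basis elements of the incidence algebra. -/
def E (x y : X) : A :=
  ⟨fun a b => if a = x ∧ b = y ∧ x ≤ y then 1 else 0, by
    intro a b h
    simp only [ite_eq_right_iff]
    rintro ⟨rfl, rfl, hxy⟩
    exact absurd hxy h⟩

@[simp] lemma E_apply (x y a b : X) :
    (E x y : A) a b = if a = x ∧ b = y ∧ x ≤ y then 1 else 0 := rfl

/-- Evaluation at a pair as an additive monoid hom. -/
def evalAM (a b : X) : A →+ ℤ where
  toFun f := f a b
  map_zero' := rfl
  map_add' _ _ := rfl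

omit [Fintype X] [DecidableEq X] [LocallyFiniteOrder X] in
lemma sum_apply {ι : Type*} (s : Finset ι) (f : ι → A) (a b : X) :
    (∑ i ∈ s, f i) a b = ∑ i ∈ s, f i a b :=
  map_sum (evalAM a b) f s

lemma E_mul_E {x y z : X} (hxy : x ≤ y) (hyz : y ≤ z) :
    (E x y : A) * E y z = E x z := by
  ext a b hab
  simp only [IncidenceAlgebra.mul_apply, E_apply]
  by_cases hax : a = x
  · by_cases hbz : b = z
    · subst hax; subst hbz
      rw [Finset.sum_eq_single y ?h0 ?h1, if_pos ⟨rfl, rfl, hxy⟩, if_pos ⟨rfl, rfl, hyz⟩,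
        if_pos ⟨rfl, rfl, hxy.trans hyz⟩, one_mul]
      case h0 =>
        intro c _ hc
        rw [if_neg (by rintro ⟨-, rfl, -⟩; exact hc rfl), zero_mul]
      case h1 =>
        intro hy; exact absurd (Finset.mem_Icc.2 ⟨hxy, hyz⟩) hy
    · rw [if_neg (by rintro ⟨-, rfl, -⟩; exact hbz rfl)]
      refine Finset.sum_eq_zero fun c _ => ?_
      rw [if_neg (show ¬(c = y ∧ b = z ∧ y ≤ z) by rintro ⟨-, rfl, -⟩; exact hbz rfl), mul_zero]
  · rw [if_neg (by rintro ⟨rfl, -⟩; exact hax rfl)]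
    refine Finset.sum_eq_zero fun c _ => ?_
    rw [if_neg (show ¬(a = x ∧ c = y ∧ x ≤ y) by rintro ⟨rfl, -⟩; exact hax rfl), zero_mul]

lemma E_mul_E_of_ne {x y z w : X} (h : y ≠ z) : (E x y : A) * E z w = 0 := by
  ext a b _
  simp only [IncidenceAlgebra.mul_apply, E_apply, IncidenceAlgebra.zero_apply]
  refine Finset.sum_eq_zero fun c _ => ?_
  by_cases hcy : c = y
  · rw [if_neg (show ¬(c = z ∧ b = w ∧ z ≤ w) by rintro ⟨rfl, -⟩; exact h hcy.symm), mul_zero]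
  · rw [if_neg (show ¬(a = x ∧ c = y ∧ x ≤ y) by rintro ⟨-, rfl, -⟩; exact hcy rfl), zero_mul]

lemma one_eq_sum_E : (1 : A) = ∑ x : X, E x x := by
  ext a b hab
  rw [sum_apply]
  simp only [IncidenceAlgebra.one_apply, E_apply, le_refl, and_true]
  by_cases h : a = b
  · subst h
    rw [if_pos rfl, Finset.sum_eq_single a ?h0 ?h1, if_pos ⟨rfl, rfl⟩]
    case h0 => intro c _ hc; rw [if_neg (by rintro ⟨rfl, -⟩; exact hc rfl)]
    case h1 => intro h; exact absurd (Finset.mem_univ a) h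
  · rw [if_neg h]
    refine (Finset.sum_eq_zero fun c _ => ?_).symm
    rw [if_neg (by rintro ⟨rfl, rfl⟩; exact h rfl)]

lemma mul_E_diag (f : A) (y : X) : f * E y y = ∑ x : X, f x y • (E x y : A) := by
  ext a b hab
  rw [sum_apply]
  simp only [IncidenceAlgebra.mul_apply, E_apply, IncidenceAlgebra.constSMul_apply,
    smul_eq_mul, le_refl, and_true]
  by_cases hb : b = y
  · subst hb
    rw [Finset.sum_eq_single b ?h0 ?h1, Finset.sum_eq_single a ?h2 ?h3]
    · simp [hab]
    case h0 =>
      intro c _ hcb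
      rw [if_neg (by rintro ⟨rfl, -⟩; exact hcb rfl), mul_zero]
    case h1 =>
      intro h; exact absurd (Finset.mem_Icc.2 ⟨hab, le_rfl⟩) h
    case h2 =>
      intro c _ hc
      rw [if_neg (by rintro ⟨rfl, -⟩; exact hc rfl), mul_zero]
    case h3 =>
      intro h; exact absurd (Finset.mem_univ a) h
  · rw [Finset.sum_eq_zero, Finset.sum_eq_zero]
    · intro c _; rw [if_neg (by rintro ⟨-, rfl, -⟩; exact hb rfl), mul_zero]
    · intro c _; rw [if_neg (by rintro ⟨-, rfl, -⟩; exact hb rfl), mul_zero]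

end Stmt9Aux

namespace Stmt9Aux

variable {X : Type} [Fintype X] [PartialOrder X] [DecidableEq X] [LocallyFiniteOrder X]

attribute [local instance] decLE

local notation "A" => IncidenceAlgebra ℤ X

/-- The "transport" map of a functor, totalized. -/
noncomputable def tmap (F : Xᵒᵖ ⥤ AddCommGrpCat.{0}) (x y : X) :
    F.obj (op y) →+ F.obj (op x) :=
  if h : x ≤ y then ((F.map (homOfLE h).op).hom : F.obj (op y) →+ F.obj (op x)) else 0

lemma tmap_of_le (F : Xᵒᵖ ⥤ AddCommGrpCat.{0}) {x y : X} (h : x ≤ y) (v : F.obj (op y)) :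
    tmap F x y v = F.map (homOfLE h).op v := by
  rw [tmap, dif_pos h]

lemma tmap_self (F : Xᵒᵖ ⥤ AddCommGrpCat.{0}) (x : X) (v : F.obj (op x)) :
    tmap F x x v = v := by
  rw [tmap_of_le F le_rfl]
  have : (homOfLE (le_refl x)).op = 𝟙 (op x) := rfl
  rw [this, F.map_id]
  rfl

lemma tmap_tmap (F : Xᵒᵖ ⥤ AddCommGrpCat.{0}) (x z y : X) (v : F.obj (op y)) :
    tmap F x z (tmap F z y v) = if x ≤ z ∧ z ≤ y then tmap F x y v else 0 := by
  by_cases h1 : x ≤ z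
  · by_cases h2 : z ≤ y
    · rw [if_pos ⟨h1, h2⟩, tmap_of_le F h1, tmap_of_le F h2, tmap_of_le F (h1.trans h2)]
      have : (homOfLE (h1.trans h2)).op = (homOfLE h2).op ≫ (homOfLE h1).op := by
        rw [← op_comp]; congr 1
      rw [this, F.map_comp, comp_apply]
    · rw [if_neg (fun hh => h2 hh.2)]
      rw [show tmap F z y = 0 from dif_neg h2]
      simp
  · rw [if_neg (fun hh => h1 hh.1)]
    rw [show tmap F x z = 0 from dif_neg h1]
    simp

abbrev ModF (F : Xᵒᵖ ⥤ AddCommGrpCat.{0}) : Type := ∀ x : X, F.obj (op x)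

noncomputable instance (F : Xᵒᵖ ⥤ AddCommGrpCat.{0}) : SMul (IncidenceAlgebra ℤ X) (ModF F) :=
  ⟨fun f m x => ∑ y : X, f x y • tmap F x y (m y)⟩

lemma modF_smul_def (F : Xᵒᵖ ⥤ AddCommGrpCat.{0}) (f : A) (m : ModF F) (x : X) :
    (f • m) x = ∑ y : X, f x y • tmap F x y (m y) := rfl

set_option maxHeartbeats 1000000 in
noncomputable instance modFModule (F : Xᵒᵖ ⥤ AddCommGrpCat.{0}) :
    Module (IncidenceAlgebra ℤ X) (ModF F) where
  one_smul m := funext fun x => by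
    rw [modF_smul_def, Finset.sum_eq_single x ?h0 ?h1]
    · rw [tmap_self, IncidenceAlgebra.one_apply, if_pos rfl, one_smul]
    case h0 =>
      intro y _ hy
      rw [IncidenceAlgebra.one_apply, if_neg (fun h => hy h.symm), zero_smul]
    case h1 => intro h; exact absurd (Finset.mem_univ x) h
  mul_smul f g m := funext fun x => by
    rw [modF_smul_def]
    have rhs : (f • g • m) x = ∑ z : X, ∑ y : X, f x z • g z y • tmap F x z (tmap F z y (m y)) := by
      rw [modF_smul_def]
      refine Finset.sum_congr rfl fun z _ => ?_
      rw [modF_smul_def, map_sum, Finset.smul_sum]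
      refine Finset.sum_congr rfl fun y _ => ?_
      rw [map_zsmul]
    rw [rhs, Finset.sum_comm]
    refine Finset.sum_congr rfl fun y _ => ?_
    rw [IncidenceAlgebra.mul_apply]
    have : (∑ z ∈ Finset.Icc x y, f x z * g z y) • tmap F x y (m y)
        = ∑ z : X, (if x ≤ z ∧ z ≤ y then (f x z * g z y) • tmap F x y (m y) else 0) := by
      rw [Finset.sum_smul, ← Finset.univ_inter (Finset.Icc x y), ← Finset.sum_ite_mem]
      exact Finset.sum_congr rfl fun z _ => by simp only [Finset.mem_Icc]
    rw [this]
    refine Finset.sum_congr rfl fun z _ => ?_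
    rw [tmap_tmap]
    by_cases h : x ≤ z ∧ z ≤ y
    · rw [if_pos h, if_pos h, mul_smul]
    · rw [if_neg h, if_neg h, smul_zero, smul_zero]
  smul_zero f := funext fun x => by
    rw [modF_smul_def]
    refine Finset.sum_eq_zero fun y _ => ?_
    show f x y • tmap F x y 0 = 0
    rw [map_zero, smul_zero]
  smul_add f m n := funext fun x => by
    rw [modF_smul_def, Pi.add_apply, modF_smul_def, modF_smul_def, ← Finset.sum_add_distrib]
    refine Finset.sum_congr rfl fun y _ => ?_
    show f x y • tmap F x y (m y + n y) = _
    rw [map_add, smul_add]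
  add_smul f g m := funext fun x => by
    rw [modF_smul_def, Pi.add_apply, modF_smul_def, modF_smul_def, ← Finset.sum_add_distrib]
    refine Finset.sum_congr rfl fun y _ => ?_
    rw [IncidenceAlgebra.add_apply, add_zsmul]
  zero_smul m := funext fun x => by
    rw [modF_smul_def]
    exact Finset.sum_eq_zero fun y _ => by rw [IncidenceAlgebra.zero_apply, zero_smul]

lemma E_smul (F : Xᵒᵖ ⥤ AddCommGrpCat.{0}) (x y : X) (m : ModF F) :
    (E x y • m : ModF F) = Pi.single x (tmap F x y (m y)) := by
  funext z
  rw [modF_smul_def]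
  by_cases hz : z = x
  · subst hz
    rw [Pi.single_eq_same, Finset.sum_eq_single y ?h0 ?h1]
    · rw [E_apply]
      by_cases h : z ≤ y
      · rw [if_pos ⟨rfl, rfl, h⟩, one_smul]
      · rw [if_neg (fun hh => h hh.2.2), zero_smul,
          show tmap F z y = 0 from dif_neg h]
        rfl
    case h0 =>
      intro w _ hw
      rw [E_apply, if_neg (by rintro ⟨-, rfl, -⟩; exact hw rfl), zero_smul]
    case h1 => intro h; exact absurd (Finset.mem_univ y) h
  · rw [Pi.single_eq_of_ne hz]
    refine Finset.sum_eq_zero fun w _ => ?_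
    rw [E_apply, if_neg (by rintro ⟨rfl, -⟩; exact hz rfl), zero_smul]

end Stmt9Aux

namespace Stmt9Aux

variable {X : Type} [Fintype X] [PartialOrder X] [DecidableEq X] [LocallyFiniteOrder X]

attribute [local instance] decLE

local notation "A" => IncidenceAlgebra ℤ X

lemma tmap_naturality {F G : Xᵒᵖ ⥤ AddCommGrpCat.{0}} (α : F ⟶ G) (x y : X)
    (v : F.obj (op y)) :
    α.app (op x) (tmap F x y v) = tmap G x y (α.app (op y) v) := by
  by_cases h : x ≤ y
  · rw [tmap_of_le F h, tmap_of_le G h, ← comp_apply, α.naturality, comp_apply]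
  · rw [show tmap F x y = 0 from dif_neg h, show tmap G x y = 0 from dif_neg h]
    simp [map_zero]

/-- The linear map on the associated modules induced by a natural transformation. -/
noncomputable def LMap {F G : Xᵒᵖ ⥤ AddCommGrpCat.{0}} (α : F ⟶ G) :
    ModF F →ₗ[IncidenceAlgebra ℤ X] ModF G where
  toFun m x := α.app (op x) (m x)
  map_add' m n := funext fun x => by simp [map_add]
  map_smul' f m := funext fun x => by
    show α.app (op x) ((f • m) x) = (f • fun x => α.app (op x) (m x) : ModF G) x
    rw [modF_smul_def, modF_smul_def, map_sum]
    exact Finset.sum_congr rfl fun y _ => by rw [map_zsmul, tmap_naturality]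

/-- The functor from representations of `X` to modules over the incidence algebra. -/
noncomputable def Phi : (Xᵒᵖ ⥤ AddCommGrpCat.{0}) ⥤ ModuleCat.{0} (IncidenceAlgebra ℤ X) where
  obj F := ModuleCat.of _ (ModF F)
  map α := ModuleCat.ofHom (LMap α)
  map_id F := rfl
  map_comp α β := rfl

lemma Phi_map_apply {F G : Xᵒᵖ ⥤ AddCommGrpCat.{0}} (α : F ⟶ G) (m : ModF F) (x : X) :
    (Phi.map α).hom m x = α.app (op x) (m x) := rfl

instance : (Phi (X := X)).Faithful where
  map_injective {F G} {α β} h := by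
    ext a v
    have h1 := congrFun (DFunLike.congr_fun (congrArg ModuleCat.Hom.hom h) (Pi.single a.unop v : ModF F)) a.unop
    erw [Phi_map_apply, Phi_map_apply, Pi.single_eq_same] at h1
    exact h1

lemma psi_single {F G : Xᵒᵖ ⥤ AddCommGrpCat.{0}}
    (ψ : ModF F →ₗ[IncidenceAlgebra ℤ X] ModF G) (y : X) (v : F.obj (op y)) :
    ψ (Pi.single y v) = Pi.single y (ψ (Pi.single y v) y) := by
  have h1 : (E y y : A) • (Pi.single y v : ModF F) = Pi.single y v := by
    rw [E_smul, Pi.single_eq_same, tmap_self]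
  conv_lhs => rw [← h1]
  rw [map_smul, E_smul, tmap_self]

/-- The natural transformation induced by a linear map between the associated modules. -/
noncomputable def natOf {F G : Xᵒᵖ ⥤ AddCommGrpCat.{0}}
    (ψ : ModF F →ₗ[IncidenceAlgebra ℤ X] ModF G) : F ⟶ G where
  app a := AddCommGrpCat.ofHom
    { toFun := fun v => ψ (Pi.single a.unop v) a.unop
      map_zero' := by
        show ψ (Pi.single a.unop 0) a.unop = 0
        rw [Pi.single_zero, map_zero]; rfl
      map_add' := fun v w => by
        show ψ (Pi.single a.unop (v + w)) a.unop = _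
        rw [Pi.single_add, map_add]; rfl }
  naturality {a b} u := by
    have h : b.unop ≤ a.unop := leOfHom u.unop
    have hu : u = (homOfLE h).op := Subsingleton.elim _ _
    rw [hu]
    ext v
    rw [comp_apply, comp_apply]
    show ψ (Pi.single b.unop (F.map (homOfLE h).op v)) b.unop
      = G.map (homOfLE h).op (ψ (Pi.single a.unop v) a.unop)
    have k1 : (Pi.single b.unop (tmap F b.unop a.unop v) : ModF F)
        = E b.unop a.unop • Pi.single a.unop v := by
      rw [E_smul, Pi.single_eq_same]
    rw [← tmap_of_le F h, k1, map_smul, E_smul, Pi.single_eq_same, tmap_of_le G h]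

lemma Phi_natOf {F G : Xᵒᵖ ⥤ AddCommGrpCat.{0}}
    (ψ : ModF F →ₗ[IncidenceAlgebra ℤ X] ModF G) :
    Phi.map (natOf ψ) = ModuleCat.ofHom ψ := by
  apply ModuleCat.hom_ext
  apply LinearMap.ext
  intro m
  funext x
  erw [Phi_map_apply]
  show ψ (Pi.single x (m x)) x = ψ m x
  conv_rhs => rw [← Finset.univ_sum_single m]
  rw [map_sum, Finset.sum_apply, Finset.sum_eq_single x ?h0 ?h1]
  case h0 =>
    intro y _ hy
    rw [psi_single ψ y (m y), Pi.single_eq_of_ne (Ne.symm hy)]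
  case h1 => intro hx; exact absurd (Finset.mem_univ x) hx

instance : (Phi (X := X)).Full where
  map_surjective {F G} ψ := ⟨natOf ψ.hom, Phi_natOf ψ.hom⟩

end Stmt9Aux

namespace Stmt9Aux

variable {X : Type} [Fintype X] [PartialOrder X] [DecidableEq X] [LocallyFiniteOrder X]

attribute [local instance] decLE

local notation "A" => IncidenceAlgebra ℤ X

/-- Fixed points of the idempotent `E x x` in a module. -/
def fixSub (M : ModuleCat.{0} (IncidenceAlgebra ℤ X)) (x : X) : AddSubgroup M where
  carrier := {m | (E x x : A) • m = m}
  zero_mem' := smul_zero _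
  add_mem' := by
    intro a b ha hb
    show (E x x : A) • (a + b) = a + b
    rw [smul_add, ha, hb]
  neg_mem' := by
    intro a ha
    show (E x x : A) • (-a) = -a
    rw [smul_neg, ha]

/-- The representation of `X` associated to a module over the incidence algebra. -/
noncomputable def FM (M : ModuleCat.{0} (IncidenceAlgebra ℤ X)) : Xᵒᵖ ⥤ AddCommGrpCat.{0} where
  obj a := AddCommGrpCat.of (fixSub M a.unop)
  map {a b} u := AddCommGrpCat.ofHom
    { toFun := fun m => ⟨(E b.unop a.unop : A) • m.val, by
        show (E b.unop b.unop : A) • _ = _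
        rw [smul_smul, E_mul_E le_rfl (leOfHom u.unop)]⟩
      map_zero' := Subtype.ext (smul_zero _)
      map_add' := fun p q => Subtype.ext (smul_add _ _ _) }
  map_id a := by
    ext m
    show (E a.unop a.unop : A) • m.val = m.val
    exact m.2
  map_comp {a b c} u v := by
    ext m
    show (E c.unop a.unop : A) • m.val
      = (E c.unop b.unop : A) • ((E b.unop a.unop : A) • m.val)
    rw [smul_smul, E_mul_E (leOfHom v.unop) (leOfHom u.unop)]

lemma tmap_FM_coe (M : ModuleCat.{0} (IncidenceAlgebra ℤ X)) {x y : X} (h : x ≤ y)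
    (v : (FM M).obj (op y)) :
    (tmap (FM M) x y v).val = (E x y : A) • v.val := by
  rw [tmap_of_le (FM M) h]
  rfl

lemma fix_spec {M : ModuleCat.{0} (IncidenceAlgebra ℤ X)} {x : X}
    (v : (FM M).obj (op x)) : (E x x : A) • v.val = v.val := v.2

/-- The comparison isomorphism for essential surjectivity. -/
noncomputable def thetaEquiv (M : ModuleCat.{0} (IncidenceAlgebra ℤ X)) :
    ModF (FM M) ≃ₗ[IncidenceAlgebra ℤ X] M where
  toFun m := ∑ x : X, (m x).val
  map_add' m n := by
    rw [← Finset.sum_add_distrib]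
    exact Finset.sum_congr rfl fun x _ => rfl
  map_smul' f m := by
    show ∑ x : X, ((f • m) x).val = f • ∑ x : X, (m x).val
    have key : ∀ x y : X, (f x y • tmap (FM M) x y (m y)).val
        = (f x y • E x y : A) • (m y).val := by
      intro x y
      have hz : (f x y • tmap (FM M) x y (m y)).val
          = f x y • (tmap (FM M) x y (m y)).val :=
        map_zsmul (fixSub M x).subtype _ _
      rw [hz]
      by_cases h : x ≤ y
      · rw [tmap_FM_coe M h, smul_assoc]
      · rw [IncidenceAlgebra.apply_eq_zero_of_not_le h f, zero_smul, zero_smul, zero_smul]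
    calc ∑ x : X, ((f • m) x).val
        = ∑ x : X, ∑ y : X, (f x y • E x y : A) • (m y).val := by
          refine Finset.sum_congr rfl fun x _ => ?_
          have h1 : ((f • m) x).val
              = ∑ y : X, (f x y • tmap (FM M) x y (m y)).val := by
            rw [modF_smul_def]
            exact map_sum (fixSub M x).subtype _ _
          rw [h1]
          exact Finset.sum_congr rfl fun y _ => key x y
      _ = ∑ y : X, (∑ x : X, (f x y • E x y : A)) • (m y).val := by
          rw [Finset.sum_comm]
          exact Finset.sum_congr rfl fun y _ => (Finset.sum_smul).symm
      _ = ∑ y : X, f • (m y).val := by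
          refine Finset.sum_congr rfl fun y _ => ?_
          rw [← mul_E_diag f y, mul_smul, fix_spec (m y)]
      _ = f • ∑ y : X, (m y).val := (Finset.smul_sum).symm
  invFun n x := ⟨(E x x : A) • n, by
    show (E x x : A) • _ = _
    rw [smul_smul, E_mul_E le_rfl le_rfl]⟩
  left_inv m := by
    funext x
    refine Subtype.ext ?_
    show (E x x : A) • (∑ y : X, (m y).val) = (m x).val
    rw [Finset.smul_sum, Finset.sum_eq_single x ?h0 ?h1]
    · exact fix_spec (m x)
    case h0 =>
      intro y _ hy
      rw [← fix_spec (m y), smul_smul, E_mul_E_of_ne (Ne.symm hy), zero_smul]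
    case h1 => intro hx; exact absurd (Finset.mem_univ x) hx
  right_inv n := by
    show ∑ x : X, (E x x : A) • n = n
    rw [← Finset.sum_smul, ← one_eq_sum_E, one_smul]

end Stmt9Aux

namespace Stmt9Aux

variable {X : Type} [Fintype X] [PartialOrder X] [DecidableEq X] [LocallyFiniteOrder X]

noncomputable instance : (Phi (X := X)).EssSurj where
  mem_essImage M := ⟨FM M, ⟨(thetaEquiv M).toModuleIso ≪≫ Iso.refl M⟩⟩

instance : (Phi (X := X)).IsEquivalence := {}

end Stmt9Aux

/-- For a finite poset `X`, the category of left modules over the incidence algebra `ℤX`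
is equivalent to the category of covariant functors `Xᵒᵖ ⥤ Ab` (representations of `X`). -/
theorem stmt_9 (X : Type) [Fintype X] [PartialOrder X] [DecidableEq X]
    [LocallyFiniteOrder X] :
    Nonempty (ModuleCat.{0} (IncidenceAlgebra ℤ X) ≌ (Xᵒᵖ ⥤ AddCommGrpCat.{0})) := by
  exact ⟨(Stmt9Aux.Phi (X := X)).asEquivalence.symm⟩
end

section
/- Let X be a finite T0 space. The restriction functor Res, sending a cosheaf M on the opens of X to the representation x ↦ M(U_x), and the functor Colim, extending a representation N of X to the precosheaf U ↦ coker( ⊕_{x,y∈U} ⊕_{z ∈ U_x∩U_y} N(z) → ⊕_{x∈U} N(x) ) (with the map given on the (x,y,z)-summand by N(i_z^x) − N(i_z^y)), are mutually inverse equivalences between the category of cosheaves of abelian groups on Open(X) and the category of representations of X (functors X^op → Ab). -/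
open CategoryTheory TopologicalSpace
open scoped DirectSum

/-- Minimal open neighbourhood of a point: intersection of all opens containing it. -/
def minSet {X : Type} [TopologicalSpace X] (x : X) : Set X :=
  ⋂₀ {U : Set X | IsOpen U ∧ x ∈ U}

lemma isOpen_minSet {X : Type} [TopologicalSpace X] [Finite X] (x : X) :
    IsOpen (minSet x) :=
  Set.Finite.isOpen_sInter (Set.toFinite _) (fun _ ht => ht.1)

/-- The minimal open neighbourhood `U_x` as an open set. -/
def minOpens {X : Type} [TopologicalSpace X] [Finite X] (x : X) : Opens X :=
  ⟨minSet x, isOpen_minSet x⟩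

/-- `X` with the partial order `x ≤ y iff U_x ⊆ U_y`, i.e. the opposite of the
specialization order; representations of `X` are functors on this poset. -/
def XOrd (X : Type) : Type := X

instance (X : Type) [TopologicalSpace X] : Preorder (XOrd X) where
  le x y := minSet (X := X) x ⊆ minSet (X := X) y
  le_refl _ := subset_rfl
  le_trans _ _ _ h h' := Set.Subset.trans h h'

/-- The cosheaf condition for a precosheaf `F` on the opens of `X`: for every open cover
`{U_j}` the sequence `⊕_{j,k} F(U_j ∩ U_k) → ⊕_j F(U_j) → F(⋃ U_j) → 0` is exact. -/
noncomputable def IsCosheaf {X : Type} [TopologicalSpace X]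
    (F : Opens X ⥤ AddCommGrpCat.{0}) : Prop :=
  ∀ (J : Type) [DecidableEq J] (U : J → Opens X),
    Function.Surjective
      (DirectSum.toAddMonoid (fun j =>
        ((F.map (homOfLE (le_iSup U j))).hom : F.obj (U j) →+ F.obj (⨆ j, U j)))) ∧
    Function.Exact
      (DirectSum.toAddMonoid (fun p : J × J =>
        (DirectSum.of (fun j => F.obj (U j)) p.1).comp
            ((F.map (homOfLE inf_le_left)).hom : F.obj (U p.1 ⊓ U p.2) →+ F.obj (U p.1))
        - (DirectSum.of (fun j => F.obj (U j)) p.2).comp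
            ((F.map (homOfLE inf_le_right)).hom : F.obj (U p.1 ⊓ U p.2) →+ F.obj (U p.2))))
      (DirectSum.toAddMonoid (fun j =>
        ((F.map (homOfLE (le_iSup U j))).hom : F.obj (U j) →+ F.obj (⨆ j, U j))))

section Basic
variable {X : Type} [TopologicalSpace X] [Finite X]

lemma mem_minSet_self (x : X) : x ∈ minSet x := fun _ hU => hU.2

lemma minSet_subset {U : Set X} (hU : IsOpen U) {x : X} (hx : x ∈ U) : minSet x ⊆ U :=
  Set.sInter_subset_of_mem ⟨hU, hx⟩

lemma minOpens_le {U : Opens X} {x : X} (hx : x ∈ U) : minOpens x ≤ U :=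
  minSet_subset U.2 hx

def toOrd {X : Type} (x : X) : XOrd X := x

lemma xord_le_iff {z x : X} : toOrd z ≤ toOrd x ↔ z ∈ minSet x := by
  constructor
  · intro h; exact h (mem_minSet_self z)
  · intro h; exact (minSet_subset (isOpen_minSet x) h : minSet z ⊆ minSet x)

lemma le_of_mem_minOpens {z x : X} (h : z ∈ minOpens x) : toOrd z ≤ toOrd x :=
  xord_le_iff.mpr h

/-- The functor `XOrd X ⥤ Opens X` sending `x` to its minimal open neighbourhood. -/
def ordToOpens : XOrd X ⥤ Opens X where
  obj x := minOpens (show X from x)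
  map {x y} f := homOfLE (leOfHom f : minSet (show X from x) ⊆ minSet (show X from y))

lemma iSup_minOpens (U : Opens X) : (⨆ z : ↥U, minOpens (z : X)) = U := by
  apply le_antisymm
  · exact iSup_le fun z => minOpens_le z.2
  · intro x hx
    exact Opens.mem_iSup.mpr ⟨⟨x, hx⟩, mem_minSet_self x⟩

/-- Restriction functor from cosheaves to representations. -/
noncomputable def Res (X : Type) [TopologicalSpace X] [Finite X] :
    ObjectProperty.FullSubcategory (IsCosheaf (X := X)) ⥤ (XOrd X ⥤ AddCommGrpCat.{0}) :=
  ObjectProperty.ι _ ⋙ (Functor.whiskeringLeft _ _ _).obj ordToOpens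

example (F : ObjectProperty.FullSubcategory (IsCosheaf (X := X))) (x : XOrd X) :
    ((Res X).obj F).obj x = F.obj.obj (minOpens (X := X) x) := rfl

end Basic

section Cover
variable {X : Type} [TopologicalSpace X] [Finite X]

attribute [local instance] Classical.propDecidable

variable (F : Opens X ⥤ AddCommGrpCat.{0})

/-- The canonical map `⊕_{z ∈ W} F(U_z) → F(W)`. -/
noncomputable def covβ (W : Opens X) :
    (⨁ z : ↥W, F.obj (minOpens (z : X))) →+ F.obj W :=
  DirectSum.toAddMonoid (fun z =>
    ((F.map (homOfLE (minOpens_le z.2))).hom : F.obj (minOpens (z : X)) →+ F.obj W))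

/-- The canonical map `⊕_{z,w ∈ W} F(U_z ⊓ U_w) → ⊕_{z ∈ W} F(U_z)`. -/
noncomputable def covα (W : Opens X) :
    (⨁ p : ↥W × ↥W, F.obj (minOpens (p.1 : X) ⊓ minOpens (p.2 : X))) →+
      ⨁ z : ↥W, F.obj (minOpens (z : X)) :=
  DirectSum.toAddMonoid (fun p =>
    (DirectSum.of (fun z : ↥W => F.obj (minOpens (z : X))) p.1).comp
        ((F.map (homOfLE inf_le_left)).hom : F.obj _ →+ F.obj (minOpens (p.1 : X)))
    - (DirectSum.of (fun z : ↥W => F.obj (minOpens (z : X))) p.2).comp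
        ((F.map (homOfLE inf_le_right)).hom : F.obj _ →+ F.obj (minOpens (p.2 : X))))

lemma covβ_eq (W : Opens X) :
    covβ F W = (AddMonoidHom.comp
      ((F.map (eqToHom (iSup_minOpens W))).hom : F.obj _ →+ F.obj W)
      (DirectSum.toAddMonoid (fun z : ↥W =>
        ((F.map (homOfLE (le_iSup (fun z : ↥W => minOpens (z : X)) z))).hom :
          F.obj (minOpens (z : X)) →+ F.obj (⨆ z : ↥W, minOpens (z : X)))))) := by
  apply DirectSum.addHom_ext
  intro z a
  simp only [covβ, DirectSum.toAddMonoid_of, AddMonoidHom.comp_apply]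
  have : F.map (homOfLE (minOpens_le z.2)) =
      F.map (homOfLE (le_iSup (fun z : ↥W => minOpens (z : X)) z)) ≫
        F.map (eqToHom (iSup_minOpens W)) := by
    rw [← F.map_comp]
    congr 1
  rw [this]
  exact CategoryTheory.comp_apply _ _ _

lemma bij_map_eqToHom {U V : Opens X} (h : U = V) :
    Function.Bijective (F.map (eqToHom h)) := by
  subst h
  simp only [eqToHom_refl, F.map_id]
  exact Function.bijective_id

lemma covβ_surj (hF : IsCosheaf F) (W : Opens X) : Function.Surjective (covβ F W) := by
  obtain ⟨hs, -⟩ := hF (↥W) (fun z => minOpens (z : X))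
  rw [covβ_eq, AddMonoidHom.coe_comp]
  exact Function.Surjective.comp (bij_map_eqToHom F (iSup_minOpens W)).2 hs

lemma cov_exact (hF : IsCosheaf F) (W : Opens X) :
    Function.Exact (covα F W) (covβ F W) := by
  obtain ⟨-, he⟩ := hF (↥W) (fun z => minOpens (z : X))
  intro y
  rw [covβ_eq]
  constructor
  · intro h
    have h0 : DirectSum.toAddMonoid (fun z : ↥W =>
        ((F.map (homOfLE (le_iSup (fun z : ↥W => minOpens (z : X)) z))).hom :
          F.obj (minOpens (z : X)) →+ F.obj (⨆ z : ↥W, minOpens (z : X)))) y = 0 := by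
      apply (bij_map_eqToHom F (iSup_minOpens W)).1
      simpa using h
    exact (he y).mp h0
  · intro h
    have h0 := (he y).mpr h
    simp only [AddMonoidHom.comp_apply, h0, map_zero]

/-- Two homs out of `F(W)` agreeing on the images of all minimal opens agree. -/
lemma hom_ext_of_cover {A : Type} [AddCommGroup A] {F} (hF : IsCosheaf F) (W : Opens X)
    {g₁ g₂ : F.obj W →+ A}
    (h : ∀ z : ↥W, g₁.comp ((F.map (homOfLE (minOpens_le z.2))).hom : F.obj (minOpens (z : X)) →+ F.obj W)
      = g₂.comp (F.map (homOfLE (minOpens_le z.2))).hom) : g₁ = g₂ := by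
  have hc : g₁.comp (covβ F W) = g₂.comp (covβ F W) := by
    apply DirectSum.addHom_ext
    intro z a
    simp only [AddMonoidHom.comp_apply, covβ, DirectSum.toAddMonoid_of]
    exact congrFun (congrArg DFunLike.coe (h z)) a
  ext w
  obtain ⟨d, rfl⟩ := covβ_surj F hF W w
  exact congrFun (congrArg DFunLike.coe hc) d

end Cover

section ResFF
variable {X : Type} [TopologicalSpace X] [Finite X]

attribute [local instance] Classical.propDecidable

lemma map_map (F : Opens X ⥤ AddCommGrpCat.{0}) {U V W : Opens X} (f : U ⟶ V) (g : V ⟶ W)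
    (h : U ≤ W) (a : F.obj U) :
    ((F.map g).hom : F.obj V →+ F.obj W) (((F.map f).hom : F.obj U →+ F.obj V) a)
      = ((F.map (homOfLE h)).hom : F.obj U →+ F.obj W) a := by
  have h1 : F.map f ≫ F.map g = F.map (homOfLE h) := by
    rw [← F.map_comp]
    exact congrArg F.map (Subsingleton.elim _ _)
  exact congrArg (fun (t : F.obj U ⟶ F.obj W) => ((t).hom : F.obj U →+ F.obj W) a) h1

variable {F G : ObjectProperty.FullSubcategory (IsCosheaf (X := X))}

lemma tau_nat (τ : (Res X).obj F ⟶ (Res X).obj G) {z x : X} (hzx : toOrd z ≤ toOrd x)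
    (f : minOpens z ⟶ minOpens x) (a : F.obj.obj (minOpens z)) :
    ((τ.app (toOrd x)).hom : F.obj.obj (minOpens x) →+ G.obj.obj (minOpens x))
        (((F.obj.map f).hom : F.obj.obj (minOpens z) →+ F.obj.obj (minOpens x)) a)
      = ((G.obj.map f).hom : G.obj.obj (minOpens z) →+ G.obj.obj (minOpens x))
        (((τ.app (toOrd z)).hom : F.obj.obj (minOpens z) →+ G.obj.obj (minOpens z)) a) := by
  have hf : ordToOpens.map (homOfLE hzx) = f := Subsingleton.elim _ _
  have hnat : F.obj.map f ≫ τ.app (toOrd x) = τ.app (toOrd z) ≫ G.obj.map f := by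
    rw [← hf]; exact τ.naturality (homOfLE hzx)
  exact congrArg (fun (t : F.obj.obj (minOpens z) ⟶ G.obj.obj (minOpens x)) =>
    ((t).hom : F.obj.obj (minOpens z) →+ G.obj.obj (minOpens x)) a) hnat

/-- The map `⊕_{z ∈ U} F(U_z) → G(U)` induced by `τ`. -/
noncomputable def psiU (τ : (Res X).obj F ⟶ (Res X).obj G) (U : Opens X) :
    (⨁ z : ↥U, F.obj.obj (minOpens (z : X))) →+ G.obj.obj U :=
  DirectSum.toAddMonoid (fun z =>
    (((G.obj.map (homOfLE (minOpens_le z.2))).hom : G.obj.obj (minOpens (z : X)) →+ G.obj.obj U)).comp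
      ((τ.app (toOrd (z : X))).hom : F.obj.obj (minOpens (z : X)) →+ G.obj.obj (minOpens (z : X))))

lemma psiU_comp_covalpha (τ : (Res X).obj F ⟶ (Res X).obj G) (U : Opens X) :
    (psiU τ U).comp (covα F.obj U) = 0 := by
  apply DirectSum.addHom_ext
  intro p c
  obtain ⟨z, w⟩ := p
  simp only [AddMonoidHom.comp_apply, covα, DirectSum.toAddMonoid_of, AddMonoidHom.sub_apply,
    map_sub, AddMonoidHom.zero_apply]
  rw [sub_eq_zero]
  show psiU τ U (DirectSum.of _ z (((F.obj.map (homOfLE inf_le_left)).hom :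
          F.obj.obj (minOpens (z : X) ⊓ minOpens (w : X)) →+ F.obj.obj (minOpens (z : X))) c))
      = psiU τ U (DirectSum.of _ w (((F.obj.map (homOfLE inf_le_right)).hom :
          F.obj.obj (minOpens (z : X) ⊓ minOpens (w : X)) →+ F.obj.obj (minOpens (w : X))) c))
  -- reduce to equality of two homs out of F(U_z ⊓ U_w)
  have key : ((psiU τ U).comp ((DirectSum.of (fun z : ↥U => F.obj.obj (minOpens (z : X))) z).comp
        ((F.obj.map (homOfLE inf_le_left)).hom :
          F.obj.obj (minOpens (z : X) ⊓ minOpens (w : X)) →+ F.obj.obj (minOpens (z : X)))))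
      = ((psiU τ U).comp ((DirectSum.of (fun z : ↥U => F.obj.obj (minOpens (z : X))) w).comp
        ((F.obj.map (homOfLE inf_le_right)).hom :
          F.obj.obj (minOpens (z : X) ⊓ minOpens (w : X)) →+ F.obj.obj (minOpens (w : X))))) := by
    apply hom_ext_of_cover F.2 (minOpens (z : X) ⊓ minOpens (w : X))
    intro u
    have huz : toOrd (u : X) ≤ toOrd (z : X) :=
      le_of_mem_minOpens ((inf_le_left : _ ≤ minOpens (z : X)) u.2)
    have huw : toOrd (u : X) ≤ toOrd (w : X) :=
      le_of_mem_minOpens ((inf_le_right : _ ≤ minOpens (w : X)) u.2)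
    have huU : (u : X) ∈ U := minOpens_le z.2 ((inf_le_left : _ ≤ minOpens (z : X)) u.2)
    ext a
    simp only [AddMonoidHom.coe_comp, Function.comp_apply, psiU, DirectSum.toAddMonoid_of]
    have step : ∀ (v : ↥U) (huv : toOrd (u : X) ≤ toOrd (v : X))
        (k : minOpens (z : X) ⊓ minOpens (w : X) ⟶ minOpens (v : X)),
        ((G.obj.map (homOfLE (minOpens_le v.2))).hom : G.obj.obj (minOpens (v : X)) →+ G.obj.obj U)
          (((τ.app (toOrd (v : X))).hom : F.obj.obj (minOpens (v : X)) →+ G.obj.obj (minOpens (v : X)))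
            (((F.obj.map k).hom : F.obj.obj (minOpens (z : X) ⊓ minOpens (w : X)) →+ F.obj.obj (minOpens (v : X)))
              (((F.obj.map (homOfLE (minOpens_le u.2))).hom :
                F.obj.obj (minOpens (u : X)) →+ F.obj.obj (minOpens (z : X) ⊓ minOpens (w : X))) a)))
        = ((G.obj.map (homOfLE (minOpens_le huU))).hom : G.obj.obj (minOpens (u : X)) →+ G.obj.obj U)
            (((τ.app (toOrd (u : X))).hom : F.obj.obj (minOpens (u : X)) →+ G.obj.obj (minOpens (u : X))) a) := by
      intro v huv k
      have hle : minOpens (u : X) ≤ minOpens (v : X) := huv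
      calc ((G.obj.map (homOfLE (minOpens_le v.2))).hom : G.obj.obj (minOpens (v : X)) →+ G.obj.obj U)
            (((τ.app (toOrd (v : X))).hom : F.obj.obj (minOpens (v : X)) →+ G.obj.obj (minOpens (v : X)))
              (((F.obj.map k).hom : _ →+ _) (((F.obj.map (homOfLE (minOpens_le u.2))).hom : _ →+ _) a)))
          = ((G.obj.map (homOfLE (minOpens_le v.2))).hom : _ →+ G.obj.obj U)
              (((τ.app (toOrd (v : X))).hom : _ →+ _)
                (((F.obj.map (homOfLE hle)).hom : _ →+ _) a)) := by
            exact congrArg (fun t => ((G.obj.map (homOfLE (minOpens_le v.2))).hom : _ →+ G.obj.obj U)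
              (((τ.app (toOrd (v : X))).hom : _ →+ _) t)) (map_map F.obj _ _ hle a)
        _ = ((G.obj.map (homOfLE (minOpens_le v.2))).hom : _ →+ G.obj.obj U)
              (((G.obj.map (homOfLE hle)).hom : _ →+ _)
                (((τ.app (toOrd (u : X))).hom : _ →+ _) a)) := by
            exact congrArg (fun t => ((G.obj.map (homOfLE (minOpens_le v.2))).hom : _ →+ G.obj.obj U) t)
              (tau_nat τ huv (homOfLE hle) a)
        _ = ((G.obj.map (homOfLE (minOpens_le huU))).hom : _ →+ G.obj.obj U)
              (((τ.app (toOrd (u : X))).hom : _ →+ _) a) :=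
            map_map G.obj _ _ (minOpens_le huU) _
    exact (step z huz (homOfLE inf_le_left)).trans (step w huw (homOfLE inf_le_right)).symm
  exact congrFun (congrArg DFunLike.coe key) c

lemma phiKer (τ : (Res X).obj F ⟶ (Res X).obj G) (U : Opens X) :
    (covβ F.obj U).ker ≤ (psiU τ U).ker := by
  intro d hd
  obtain ⟨c, rfl⟩ := (cov_exact F.obj F.2 U d).mp hd
  show psiU τ U (covα F.obj U c) = 0
  have := congrFun (congrArg DFunLike.coe (psiU_comp_covalpha τ U)) c
  simpa using this

/-- The component at `U` of the morphism of cosheaves extending `τ`. -/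
noncomputable def phiApp (τ : (Res X).obj F ⟶ (Res X).obj G) (U : Opens X) :
    F.obj.obj U ⟶ G.obj.obj U :=
  AddCommGrpCat.ofHom ((covβ F.obj U).liftOfRightInverse (Function.surjInv (covβ_surj F.obj F.2 U))
    (Function.rightInverse_surjInv _) ⟨psiU τ U, phiKer τ U⟩ :
      F.obj.obj U →+ G.obj.obj U)

lemma phiApp_comm (τ : (Res X).obj F ⟶ (Res X).obj G) (U : Opens X) (z : ↥U)
    (a : F.obj.obj (minOpens (z : X))) :
    ((phiApp τ U).hom : F.obj.obj U →+ G.obj.obj U)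
        (((F.obj.map (homOfLE (minOpens_le z.2))).hom : F.obj.obj (minOpens (z : X)) →+ F.obj.obj U) a)
      = ((G.obj.map (homOfLE (minOpens_le z.2))).hom : G.obj.obj (minOpens (z : X)) →+ G.obj.obj U)
        (((τ.app (toOrd (z : X))).hom :
          F.obj.obj (minOpens (z : X)) →+ G.obj.obj (minOpens (z : X))) a) := by
  have h1 : covβ F.obj U (DirectSum.of (fun z : ↥U => F.obj.obj (minOpens (z : X))) z a)
      = ((F.obj.map (homOfLE (minOpens_le z.2))).hom :
          F.obj.obj (minOpens (z : X)) →+ F.obj.obj U) a := by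
    simp only [covβ, DirectSum.toAddMonoid_of]
  rw [← h1]
  have h2 := AddMonoidHom.liftOfRightInverse_comp_apply (covβ F.obj U)
    (Function.surjInv (covβ_surj F.obj F.2 U)) (Function.rightInverse_surjInv _)
    ⟨psiU τ U, phiKer τ U⟩ (DirectSum.of (fun z : ↥U => F.obj.obj (minOpens (z : X))) z a)
  have h3 : psiU τ U (DirectSum.of (fun z : ↥U => F.obj.obj (minOpens (z : X))) z a)
      = ((G.obj.map (homOfLE (minOpens_le z.2))).hom : G.obj.obj (minOpens (z : X)) →+ G.obj.obj U)
        (((τ.app (toOrd (z : X))).hom :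
          F.obj.obj (minOpens (z : X)) →+ G.obj.obj (minOpens (z : X))) a) :=
    DirectSum.toAddMonoid_of _ _ _
  exact h2.trans h3

lemma phiApp_nat (τ : (Res X).obj F ⟶ (Res X).obj G) {U V : Opens X} (f : U ⟶ V) :
    F.obj.map f ≫ phiApp τ V = phiApp τ U ≫ G.obj.map f := by
  have key : ((phiApp τ V).hom : F.obj.obj V →+ G.obj.obj V).comp
        ((F.obj.map f).hom : F.obj.obj U →+ F.obj.obj V)
      = ((G.obj.map f).hom : G.obj.obj U →+ G.obj.obj V).comp
        ((phiApp τ U).hom : F.obj.obj U →+ G.obj.obj U) := by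
    apply hom_ext_of_cover F.2 U
    intro z
    have hzV : (z : X) ∈ V := leOfHom f z.2
    ext a
    simp only [AddMonoidHom.coe_comp, Function.comp_apply]
    rw [map_map F.obj _ _ (minOpens_le hzV)]
    have h1 := phiApp_comm τ V ⟨(z : X), hzV⟩ a
    rw [h1, phiApp_comm τ U z a]
    exact (map_map G.obj _ _ (minOpens_le hzV) _).symm
  ext a
  exact congrFun (congrArg DFunLike.coe key) a

noncomputable instance : (Res X).Full where
  map_surjective {F G} τ := by
    refine ⟨ObjectProperty.homMk { app := phiApp τ, naturality := fun {U V} f => phiApp_nat τ f }, ?_⟩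
    apply NatTrans.ext
    funext x
    have key : ((phiApp τ (minOpens (show X from x))).hom :
          F.obj.obj (minOpens (show X from x)) →+ G.obj.obj (minOpens (show X from x)))
        = ((τ.app x).hom : F.obj.obj (minOpens (show X from x)) →+ G.obj.obj (minOpens (show X from x))) := by
      apply hom_ext_of_cover F.2 (minOpens (show X from x))
      intro z
      ext a
      simp only [AddMonoidHom.coe_comp, Function.comp_apply]
      have h1 := phiApp_comm τ (minOpens (show X from x)) z a
      have h2 := tau_nat τ (le_of_mem_minOpens z.2) (homOfLE (minOpens_le z.2)) a
      exact h1.trans h2.symm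
    exact AddCommGrpCat.hom_ext key

instance : (Res X).Faithful where
  map_injective {F G} {φ ψ} h := by
    apply ObjectProperty.hom_ext
    apply NatTrans.ext
    funext U
    have key : ((φ.hom.app U).hom : F.obj.obj U →+ G.obj.obj U) = ((ψ.hom.app U).hom : _ →+ _) := by
      apply hom_ext_of_cover F.2 U
      intro z
      have happ : φ.hom.app (minOpens (z : X)) = ψ.hom.app (minOpens (z : X)) :=
        congrArg (fun t => NatTrans.app t (toOrd (z : X))) h
      have hφ := φ.hom.naturality (homOfLE (minOpens_le z.2) : minOpens (z : X) ⟶ U)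
      have hψ := ψ.hom.naturality (homOfLE (minOpens_le z.2) : minOpens (z : X) ⟶ U)
      ext a
      simp only [AddMonoidHom.coe_comp, Function.comp_apply]
      calc ((φ.hom.app U).hom : F.obj.obj U →+ G.obj.obj U)
            (((F.obj.map (homOfLE (minOpens_le z.2))).hom : _ →+ F.obj.obj U) a)
          = ((G.obj.map (homOfLE (minOpens_le z.2))).hom : _ →+ G.obj.obj U)
              (((φ.hom.app (minOpens (z : X))).hom : _ →+ _) a) :=
            congrArg (fun (t : F.obj.obj (minOpens (z : X)) ⟶ G.obj.obj U) =>
              ((t).hom : F.obj.obj (minOpens (z : X)) →+ G.obj.obj U) a) hφ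
        _ = ((G.obj.map (homOfLE (minOpens_le z.2))).hom : _ →+ G.obj.obj U)
              (((ψ.hom.app (minOpens (z : X))).hom : _ →+ _) a) := by rw [happ]
        _ = ((ψ.hom.app U).hom : F.obj.obj U →+ G.obj.obj U)
              (((F.obj.map (homOfLE (minOpens_le z.2))).hom : _ →+ F.obj.obj U) a) :=
            (congrArg (fun (t : F.obj.obj (minOpens (z : X)) ⟶ G.obj.obj U) =>
              ((t).hom : F.obj.obj (minOpens (z : X)) →+ G.obj.obj U) a) hψ).symm
    exact AddCommGrpCat.hom_ext key

end ResFF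

section EssSurj
variable {X : Type} [TopologicalSpace X] [Finite X]

attribute [local instance] Classical.propDecidable

lemma map_mapN (N : XOrd X ⥤ AddCommGrpCat.{0}) {u v w : XOrd X} (f : u ⟶ v) (g : v ⟶ w)
    (h : u ≤ w) (a : N.obj u) :
    ((N.map g).hom : N.obj v →+ N.obj w) (((N.map f).hom : N.obj u →+ N.obj v) a)
      = ((N.map (homOfLE h)).hom : N.obj u →+ N.obj w) a := by
  have h1 : N.map f ≫ N.map g = N.map (homOfLE h) := by
    rw [← N.map_comp]
    exact congrArg N.map (Subsingleton.elim _ _)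
  exact congrArg (fun (t : N.obj u ⟶ N.obj w) => ((t).hom : N.obj u →+ N.obj w) a) h1

variable (N : XOrd X ⥤ AddCommGrpCat.{0})

/-- The direct sum `⊕_{x ∈ U} N(x)`. -/
abbrev DSU (U : Opens X) : Type := ⨁ (x : ↥U), N.obj (toOrd (x : X))

/-- The subgroup of relations defining the colimit. -/
def relSet (U : Opens X) : AddSubgroup (DSU N U) := AddSubgroup.closure
  { d | ∃ (z x : ↥U) (h : toOrd (z : X) ≤ toOrd (x : X)) (a : N.obj (toOrd (z : X))),
      d = DirectSum.of (fun y : ↥U => N.obj (toOrd (y : X))) x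
            (((N.map (homOfLE h)).hom : N.obj (toOrd (z : X)) →+ N.obj (toOrd (x : X))) a)
        - DirectSum.of (fun y : ↥U => N.obj (toOrd (y : X))) z a }

/-- Object part of the colimit extension. -/
noncomputable def cFobj (U : Opens X) : AddCommGrpCat.{0} :=
  AddCommGrpCat.of (DSU N U ⧸ relSet N U)

/-- Inclusion of direct sums. -/
noncomputable def dsMap {U V : Opens X} (h : U ≤ V) : DSU N U →+ DSU N V :=
  DirectSum.toAddMonoid (fun x =>
    DirectSum.of (fun y : ↥V => N.obj (toOrd (y : X))) ⟨(x : X), h x.2⟩)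

lemma dsMap_of {U V : Opens X} (h : U ≤ V) (x : ↥U) (a : N.obj (toOrd (x : X))) :
    dsMap N h (DirectSum.of (fun y : ↥U => N.obj (toOrd (y : X))) x a)
      = DirectSum.of (fun y : ↥V => N.obj (toOrd (y : X))) ⟨(x : X), h x.2⟩ a :=
  DirectSum.toAddMonoid_of _ _ _

lemma dsMap_rel {U V : Opens X} (h : U ≤ V) {d : DSU N U} (hd : d ∈ relSet N U) :
    dsMap N h d ∈ relSet N V := by
  have hle : relSet N U ≤ (relSet N V).comap (dsMap N h) := by
    refine (AddSubgroup.closure_le _).mpr ?_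
    rintro d ⟨z, x, hzx, a, rfl⟩
    show dsMap N h _ ∈ relSet N V
    rw [map_sub, dsMap_of, dsMap_of]
    exact AddSubgroup.subset_closure ⟨⟨(z : X), h z.2⟩, ⟨(x : X), h x.2⟩, hzx, a, rfl⟩
  exact hle hd

/-- Transition maps of the colimit extension. -/
noncomputable def cFmap {U V : Opens X} (h : U ≤ V) : cFobj N U ⟶ cFobj N V :=
  AddCommGrpCat.ofHom (QuotientAddGroup.lift (relSet N U)
    ((QuotientAddGroup.mk' (relSet N V)).comp (dsMap N h))
    (fun d hd => by
      show QuotientAddGroup.mk' (relSet N V) (dsMap N h d) = 0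
      rw [QuotientAddGroup.mk'_apply, QuotientAddGroup.eq_zero_iff]
      exact dsMap_rel N h hd) : (DSU N U ⧸ relSet N U) →+ (DSU N V ⧸ relSet N V))

lemma cFmap_mk {U V : Opens X} (h : U ≤ V) (x : ↥U) (a : N.obj (toOrd (x : X))) :
    ((cFmap N h).hom : (DSU N U ⧸ relSet N U) →+ (DSU N V ⧸ relSet N V))
        (QuotientAddGroup.mk (DirectSum.of (fun y : ↥U => N.obj (toOrd (y : X))) x a))
      = QuotientAddGroup.mk
          (DirectSum.of (fun y : ↥V => N.obj (toOrd (y : X))) ⟨(x : X), h x.2⟩ a) := by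
  show QuotientAddGroup.mk' (relSet N V) (dsMap N h (DirectSum.of _ x a)) = _
  rw [dsMap_of]
  rfl

/-- Extension lemma: homs out of `cFobj` agree if they agree on generators. -/
lemma cF_hom_ext {U : Opens X} {A : Type} [AddCommGroup A]
    {g₁ g₂ : (DSU N U ⧸ relSet N U) →+ A}
    (h : ∀ (x : ↥U) (a : N.obj (toOrd (x : X))),
      g₁ (QuotientAddGroup.mk (DirectSum.of (fun y : ↥U => N.obj (toOrd (y : X))) x a))
        = g₂ (QuotientAddGroup.mk (DirectSum.of (fun y : ↥U => N.obj (toOrd (y : X))) x a))) :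
    g₁ = g₂ := by
  apply QuotientAddGroup.addMonoidHom_ext
  apply DirectSum.addHom_ext
  intro x a
  exact h x a

/-- The relation in the quotient. -/
lemma cF_rel {U : Opens X} (z x : ↥U) (h : toOrd (z : X) ≤ toOrd (x : X))
    (a : N.obj (toOrd (z : X))) :
    (QuotientAddGroup.mk (DirectSum.of (fun y : ↥U => N.obj (toOrd (y : X))) x
        (((N.map (homOfLE h)).hom : N.obj (toOrd (z : X)) →+ N.obj (toOrd (x : X))) a))
      : DSU N U ⧸ relSet N U)
      = QuotientAddGroup.mk (DirectSum.of (fun y : ↥U => N.obj (toOrd (y : X))) z a) := by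
  rw [QuotientAddGroup.eq]
  have hm : _ ∈ relSet N U := AddSubgroup.subset_closure ⟨z, x, h, a, rfl⟩
  have := AddSubgroup.neg_mem _ hm
  rwa [neg_sub, sub_eq_neg_add] at this

/-- The colimit extension of a representation, as a precosheaf. -/
noncomputable def colimF : Opens X ⥤ AddCommGrpCat.{0} where
  obj := cFobj N
  map {U V} f := cFmap N (leOfHom f)
  map_id U := by
    refine AddCommGrpCat.hom_ext (cF_hom_ext N (fun x a => ?_))
    show ((cFmap N (leOfHom (𝟙 U))).hom : (DSU N U ⧸ relSet N U) →+ (DSU N U ⧸ relSet N U))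
        (QuotientAddGroup.mk (DirectSum.of (fun y : ↥U => N.obj (toOrd (y : X))) x a))
      = QuotientAddGroup.mk (DirectSum.of (fun y : ↥U => N.obj (toOrd (y : X))) x a)
    rw [cFmap_mk]
  map_comp {U V W} f g := by
    refine AddCommGrpCat.hom_ext (cF_hom_ext N (fun x a => ?_))
    show ((cFmap N (leOfHom (f ≫ g))).hom : (DSU N U ⧸ relSet N U) →+ (DSU N W ⧸ relSet N W))
        (QuotientAddGroup.mk (DirectSum.of (fun y : ↥U => N.obj (toOrd (y : X))) x a))
      = ((cFmap N (leOfHom g)).hom : (DSU N V ⧸ relSet N V) →+ (DSU N W ⧸ relSet N W))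
          (((cFmap N (leOfHom f)).hom : (DSU N U ⧸ relSet N U) →+ (DSU N V ⧸ relSet N V))
            (QuotientAddGroup.mk (DirectSum.of (fun y : ↥U => N.obj (toOrd (y : X))) x a)))
    rw [cFmap_mk, cFmap_mk, cFmap_mk]

end EssSurj

section CosheafProof
variable {X : Type} [TopologicalSpace X] [Finite X]

attribute [local instance] Classical.propDecidable

/-- Generic exactness criterion via a section into the cokernel. -/
lemma exact_of_section {A B C : Type} [AddCommGroup A] [AddCommGroup B] [AddCommGroup C]
    (α : A →+ B) (β : B →+ C) (hcomp : β.comp α = 0)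
    (s : C →+ B ⧸ α.range) (hs : s.comp β = QuotientAddGroup.mk' α.range) :
    Function.Exact α β := by
  intro y
  constructor
  · intro hy
    have h0 : QuotientAddGroup.mk' α.range y = 0 := by
      have h1 : s (β y) = QuotientAddGroup.mk' α.range y :=
        congrFun (congrArg DFunLike.coe hs) y
      rw [hy, map_zero] at h1
      exact h1.symm
    rw [QuotientAddGroup.mk'_apply, QuotientAddGroup.eq_zero_iff] at h0
    obtain ⟨c, hc⟩ := h0
    exact ⟨c, hc⟩
  · rintro ⟨c, rfl⟩
    have : β (α c) = (β.comp α) c := rfl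
    rw [this, hcomp]
    rfl

variable (N : XOrd X ⥤ AddCommGrpCat.{0}) (J : Type) [DecidableEq J] (U : J → Opens X)

/-- The first map in the cosheaf sequence for `colimF N`. -/
noncomputable def alphaJ :
    (⨁ p : J × J, (colimF N).obj (U p.1 ⊓ U p.2)) →+ ⨁ j, (colimF N).obj (U j) :=
  DirectSum.toAddMonoid (fun p : J × J =>
    (DirectSum.of (fun j => (colimF N).obj (U j)) p.1).comp
        (((colimF N).map (homOfLE inf_le_left)).hom :
          (colimF N).obj (U p.1 ⊓ U p.2) →+ (colimF N).obj (U p.1))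
    - (DirectSum.of (fun j => (colimF N).obj (U j)) p.2).comp
        (((colimF N).map (homOfLE inf_le_right)).hom :
          (colimF N).obj (U p.1 ⊓ U p.2) →+ (colimF N).obj (U p.2)))

/-- The second map in the cosheaf sequence for `colimF N`. -/
noncomputable def betaJ :
    (⨁ j, (colimF N).obj (U j)) →+ (colimF N).obj (⨆ j, U j) :=
  DirectSum.toAddMonoid (fun j =>
    (((colimF N).map (homOfLE (le_iSup U j))).hom :
      (colimF N).obj (U j) →+ (colimF N).obj (⨆ j, U j)))

lemma betaJ_of (j : J) (x : ↥(U j)) (a : N.obj (toOrd (x : X))) :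
    betaJ N J U (DirectSum.of (fun j => (colimF N).obj (U j)) j
        (QuotientAddGroup.mk (DirectSum.of (fun y : ↥(U j) => N.obj (toOrd (y : X))) x a)))
      = QuotientAddGroup.mk (DirectSum.of (fun y : ↥(⨆ j, U j) => N.obj (toOrd (y : X)))
          ⟨(x : X), le_iSup U j x.2⟩ a) := by
  have h1 : betaJ N J U (DirectSum.of (fun j => (colimF N).obj (U j)) j
        (QuotientAddGroup.mk (DirectSum.of (fun y : ↥(U j) => N.obj (toOrd (y : X))) x a)))
      = ((cFmap N (le_iSup U j)).hom : _ →+ _)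
          (QuotientAddGroup.mk (DirectSum.of (fun y : ↥(U j) => N.obj (toOrd (y : X))) x a)) := by
    exact DirectSum.toAddMonoid_of _ _ _
  rw [h1, cFmap_mk]

lemma surjJ : Function.Surjective (betaJ N J U) := by
  intro q
  refine QuotientAddGroup.induction_on q (fun d => ?_)
  refine DirectSum.induction_on d ⟨0, by simp; rfl⟩ (fun x a => ?_) ?_
  · obtain ⟨j, hj⟩ := Opens.mem_iSup.mp x.2
    exact ⟨DirectSum.of (fun j => (colimF N).obj (U j)) j
      (QuotientAddGroup.mk (DirectSum.of (fun y : ↥(U j) => N.obj (toOrd (y : X))) ⟨(x : X), hj⟩ a)),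
      betaJ_of N J U j ⟨(x : X), hj⟩ a⟩
  · rintro d1 d2 ⟨b1, hb1⟩ ⟨b2, hb2⟩
    refine ⟨b1 + b2, ?_⟩
    rw [map_add, hb1, hb2]
    rfl

lemma betaJ_comp_alphaJ : (betaJ N J U).comp (alphaJ N J U) = 0 := by
  apply DirectSum.addHom_ext
  intro p c
  obtain ⟨j, k⟩ := p
  simp only [AddMonoidHom.comp_apply, alphaJ, DirectSum.toAddMonoid_of, AddMonoidHom.sub_apply,
    map_sub, AddMonoidHom.coe_comp, Function.comp_apply, AddMonoidHom.zero_apply]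
  rw [sub_eq_zero]
  have hb1 : ∀ (m : J) (hm : U j ⊓ U k ≤ U m)
      (c' : (colimF N).obj (U j ⊓ U k)),
      betaJ N J U (DirectSum.of (fun j => (colimF N).obj (U j)) m
          ((((colimF N).map (homOfLE hm)).hom : _ →+ _) c'))
        = (((colimF N).map (homOfLE (le_trans inf_le_left (le_iSup U j)))).hom :
            (colimF N).obj (U j ⊓ U k) →+ (colimF N).obj (⨆ j, U j)) c' := by
    intro m hm c'
    have h2 : betaJ N J U (DirectSum.of (fun j => (colimF N).obj (U j)) m
          ((((colimF N).map (homOfLE hm)).hom : _ →+ _) c'))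
        = (((colimF N).map (homOfLE (le_iSup U m))).hom : _ →+ _)
            ((((colimF N).map (homOfLE hm)).hom : _ →+ _) c') := by
      simp only [betaJ, DirectSum.toAddMonoid_of]
    rw [h2]
    exact map_map (colimF N) _ _ _ c'
  exact (hb1 j inf_le_left c).trans (hb1 k inf_le_right c).symm

/-- Choice of a cover index containing a given point. -/
noncomputable def jxc (x : ↥(⨆ j, U j)) : J := (Opens.mem_iSup.mp x.2).choose

lemma jxc_mem (x : ↥(⨆ j, U j)) : (x : X) ∈ U (jxc J U x) :=
  (Opens.mem_iSup.mp x.2).choose_spec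

/-- Key independence lemma: the class in the cokernel does not depend on the chosen index. -/
lemma indep (j k : J) (t : X) (hj : t ∈ U j) (hk : t ∈ U k) (a : N.obj (toOrd t)) :
    QuotientAddGroup.mk' (alphaJ N J U).range
        (DirectSum.of (fun j => (colimF N).obj (U j)) j
          (QuotientAddGroup.mk (DirectSum.of (fun y : ↥(U j) => N.obj (toOrd (y : X))) ⟨t, hj⟩ a)))
      = QuotientAddGroup.mk' (alphaJ N J U).range
        (DirectSum.of (fun j => (colimF N).obj (U j)) k
          (QuotientAddGroup.mk (DirectSum.of (fun y : ↥(U k) => N.obj (toOrd (y : X))) ⟨t, hk⟩ a))) := by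
  rw [QuotientAddGroup.mk'_apply, QuotientAddGroup.mk'_apply, QuotientAddGroup.eq]
  refine ⟨-(DirectSum.of (fun p : J × J => ((colimF N).obj (U p.1 ⊓ U p.2) : Type)) (j, k)
    (QuotientAddGroup.mk
      (DirectSum.of (fun y : ↥(U j ⊓ U k) => N.obj (toOrd (y : X))) ⟨t, ⟨hj, hk⟩⟩ a))), ?_⟩
  rw [map_neg]
  have h1 : alphaJ N J U (DirectSum.of (fun p : J × J => ((colimF N).obj (U p.1 ⊓ U p.2) : Type)) (j, k)
      (QuotientAddGroup.mk
        (DirectSum.of (fun y : ↥(U j ⊓ U k) => N.obj (toOrd (y : X))) ⟨t, ⟨hj, hk⟩⟩ a)))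
      = DirectSum.of (fun j => (colimF N).obj (U j)) j
          (((cFmap N inf_le_left).hom : _ →+ _) (QuotientAddGroup.mk
            (DirectSum.of (fun y : ↥(U j ⊓ U k) => N.obj (toOrd (y : X))) ⟨t, ⟨hj, hk⟩⟩ a)))
        - DirectSum.of (fun j => (colimF N).obj (U j)) k
          (((cFmap N inf_le_right).hom : _ →+ _) (QuotientAddGroup.mk
            (DirectSum.of (fun y : ↥(U j ⊓ U k) => N.obj (toOrd (y : X))) ⟨t, ⟨hj, hk⟩⟩ a))) := by
    exact DirectSum.toAddMonoid_of _ _ _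
  rw [h1, cFmap_mk, cFmap_mk, neg_sub, sub_eq_neg_add]

/-- The section `⊕_{x ∈ V} N(x) → coker α`. -/
noncomputable def sJ0 : DSU N (⨆ j, U j) →+
    (⨁ j, (colimF N).obj (U j)) ⧸ (alphaJ N J U).range :=
  DirectSum.toAddMonoid (fun x =>
    ((QuotientAddGroup.mk' (alphaJ N J U).range).comp
      ((DirectSum.of (fun j => (colimF N).obj (U j)) (jxc J U x)).comp
        ((QuotientAddGroup.mk' (relSet N (U (jxc J U x)))).comp
          (DirectSum.of (fun y : ↥(U (jxc J U x)) => N.obj (toOrd (y : X)))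
            ⟨(x : X), jxc_mem J U x⟩)))))

lemma sJ0_of (x : ↥(⨆ j, U j)) (a : N.obj (toOrd (x : X))) :
    sJ0 N J U (DirectSum.of (fun y : ↥(⨆ j, U j) => N.obj (toOrd (y : X))) x a)
      = QuotientAddGroup.mk' (alphaJ N J U).range
          (DirectSum.of (fun j => (colimF N).obj (U j)) (jxc J U x)
            (QuotientAddGroup.mk
              (DirectSum.of (fun y : ↥(U (jxc J U x)) => N.obj (toOrd (y : X)))
                ⟨(x : X), jxc_mem J U x⟩ a))) := by
  simp only [sJ0, DirectSum.toAddMonoid_of]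
  rfl

lemma sJ0_rel : relSet N (⨆ j, U j) ≤ (sJ0 N J U).ker := by
  refine (AddSubgroup.closure_le _).mpr ?_
  rintro d ⟨z, x, hzx, a, rfl⟩
  show sJ0 N J U _ = 0
  rw [map_sub, sub_eq_zero, sJ0_of, sJ0_of]
  have hz1 : (z : X) ∈ U (jxc J U x) :=
    minSet_subset (U (jxc J U x)).2 (jxc_mem J U x) (xord_le_iff.mp hzx)
  have e1 : (QuotientAddGroup.mk
      (DirectSum.of (fun y : ↥(U (jxc J U x)) => N.obj (toOrd (y : X)))
        ⟨(x : X), jxc_mem J U x⟩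
        (((N.map (homOfLE hzx)).hom : N.obj (toOrd (z : X)) →+ N.obj (toOrd (x : X))) a))
      : DSU N (U (jxc J U x)) ⧸ relSet N (U (jxc J U x)))
      = QuotientAddGroup.mk
        (DirectSum.of (fun y : ↥(U (jxc J U x)) => N.obj (toOrd (y : X))) ⟨(z : X), hz1⟩ a) :=
    cF_rel N ⟨(z : X), hz1⟩ ⟨(x : X), jxc_mem J U x⟩ hzx a
  rw [e1]
  exact indep N J U (jxc J U x) (jxc J U z) (z : X) hz1 (jxc_mem J U z) a

/-- The section out of `colimF N (⋃ Uj)`. -/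
noncomputable def sJ : (colimF N).obj (⨆ j, U j) →+
    (⨁ j, (colimF N).obj (U j)) ⧸ (alphaJ N J U).range :=
  QuotientAddGroup.lift (relSet N (⨆ j, U j)) (sJ0 N J U) (sJ0_rel N J U)

lemma sJ_comp_betaJ : (sJ N J U).comp (betaJ N J U)
    = QuotientAddGroup.mk' (alphaJ N J U).range := by
  apply DirectSum.addHom_ext
  intro j y
  refine QuotientAddGroup.induction_on y (fun d => ?_)
  refine DirectSum.induction_on d (by
    have h0 : DirectSum.of (fun i => (colimF N).obj (U i)) j
        ((0 : DSU N (U j)) : DSU N (U j) ⧸ relSet N (U j)) = 0 := map_zero _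
    simp only [h0, map_zero]) (fun x a => ?_) ?_
  · have h1 : (sJ N J U).comp (betaJ N J U)
        (DirectSum.of (fun j => (colimF N).obj (U j)) j
          (QuotientAddGroup.mk (DirectSum.of (fun y : ↥(U j) => N.obj (toOrd (y : X))) x a)))
        = sJ N J U (QuotientAddGroup.mk
            (DirectSum.of (fun y : ↥(⨆ j, U j) => N.obj (toOrd (y : X)))
              ⟨(x : X), le_iSup U j x.2⟩ a)) := by
      rw [AddMonoidHom.comp_apply, betaJ_of]
    rw [h1]
    have h2 : sJ N J U (QuotientAddGroup.mk
        (DirectSum.of (fun y : ↥(⨆ j, U j) => N.obj (toOrd (y : X)))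
          ⟨(x : X), le_iSup U j x.2⟩ a))
        = sJ0 N J U (DirectSum.of (fun y : ↥(⨆ j, U j) => N.obj (toOrd (y : X)))
            ⟨(x : X), le_iSup U j x.2⟩ a) := rfl
    rw [h2, sJ0_of]
    exact indep N J U (jxc J U ⟨(x : X), le_iSup U j x.2⟩) j (x : X) _ x.2 a
  · intro d1 d2 h1 h2
    have ed : (QuotientAddGroup.mk (d1 + d2) : DSU N (U j) ⧸ relSet N (U j))
        = QuotientAddGroup.mk d1 + QuotientAddGroup.mk d2 := rfl
    have e2 : DirectSum.of (fun i => (colimF N).obj (U i)) j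
        ((d1 + d2 : DSU N (U j)) : DSU N (U j) ⧸ relSet N (U j))
        = DirectSum.of (fun i => (colimF N).obj (U i)) j (d1 : DSU N (U j) ⧸ relSet N (U j))
          + DirectSum.of (fun i => (colimF N).obj (U i)) j (d2 : DSU N (U j) ⧸ relSet N (U j)) :=
      (congrArg (DirectSum.of (fun i => (colimF N).obj (U i)) j) ed).trans (map_add _ _ _)
    rw [e2, map_add, map_add, h1, h2]

lemma exactJ : Function.Exact (alphaJ N J U) (betaJ N J U) :=
  exact_of_section _ _ (betaJ_comp_alphaJ N J U) (sJ N J U) (sJ_comp_betaJ N J U)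

/-- `colimF N` is a cosheaf. -/
theorem colimF_isCosheaf : IsCosheaf (colimF N) := by
  intro J instJ U
  exact ⟨surjJ N J U, exactJ N J U⟩

end CosheafProof

section Iso
variable {X : Type} [TopologicalSpace X] [Finite X]

attribute [local instance] Classical.propDecidable

variable (N : XOrd X ⥤ AddCommGrpCat.{0})

/-- Evaluation `colimF N (U_x) → N(x)`. -/
noncomputable def toNhom (x : X) :
    (DSU N (minOpens x) ⧸ relSet N (minOpens x)) →+ N.obj (toOrd x) :=
  QuotientAddGroup.lift (relSet N (minOpens x))
    (DirectSum.toAddMonoid (fun z : ↥(minOpens x) =>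
      ((N.map (homOfLE (le_of_mem_minOpens z.2))).hom : N.obj (toOrd (z : X)) →+ N.obj (toOrd x))))
    (by
      refine (AddSubgroup.closure_le _).mpr ?_
      rintro d ⟨z, x', h, a, rfl⟩
      show DirectSum.toAddMonoid _ _ = 0
      rw [map_sub, sub_eq_zero, DirectSum.toAddMonoid_of, DirectSum.toAddMonoid_of]
      exact map_mapN N _ _ _ a)

lemma toNhom_mk (x : X) (z : ↥(minOpens x)) (a : N.obj (toOrd (z : X))) :
    toNhom N x (QuotientAddGroup.mk
        (DirectSum.of (fun y : ↥(minOpens x) => N.obj (toOrd (y : X))) z a))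
      = ((N.map (homOfLE (le_of_mem_minOpens z.2))).hom : N.obj (toOrd (z : X)) →+ N.obj (toOrd x)) a := by
  have h : toNhom N x (QuotientAddGroup.mk
      (DirectSum.of (fun y : ↥(minOpens x) => N.obj (toOrd (y : X))) z a))
      = DirectSum.toAddMonoid (fun z : ↥(minOpens x) =>
          ((N.map (homOfLE (le_of_mem_minOpens z.2))).hom : N.obj (toOrd (z : X)) →+ N.obj (toOrd x)))
        (DirectSum.of (fun y : ↥(minOpens x) => N.obj (toOrd (y : X))) z a) := rfl
  rw [h, DirectSum.toAddMonoid_of]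

/-- Inclusion `N(x) → colimF N (U_x)`. -/
noncomputable def fromN (x : X) :
    N.obj (toOrd x) →+ (DSU N (minOpens x) ⧸ relSet N (minOpens x)) :=
  (QuotientAddGroup.mk' (relSet N (minOpens x))).comp
    (DirectSum.of (fun y : ↥(minOpens x) => N.obj (toOrd (y : X))) ⟨x, mem_minSet_self x⟩)

lemma toNhom_fromN (x : X) (a : N.obj (toOrd x)) : toNhom N x (fromN N x a) = a := by
  have h1 : toNhom N x (fromN N x a)
      = ((N.map (homOfLE (le_of_mem_minOpens (mem_minSet_self x)))).hom :
          N.obj (toOrd x) →+ N.obj (toOrd x)) a :=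
    toNhom_mk N x ⟨x, mem_minSet_self x⟩ a
  rw [h1, show (homOfLE (le_of_mem_minOpens (mem_minSet_self x)) : toOrd x ⟶ toOrd x)
    = 𝟙 (toOrd x) from rfl, N.map_id]
  rfl

lemma fromN_toNhom (x : X) :
    (fromN N x).comp (toNhom N x) = AddMonoidHom.id _ := by
  refine cF_hom_ext N (fun z a => ?_)
  have h1 : fromN N x (toNhom N x (QuotientAddGroup.mk
      (DirectSum.of (fun y : ↥(minOpens x) => N.obj (toOrd (y : X))) z a)))
      = fromN N x (((N.map (homOfLE (le_of_mem_minOpens z.2))).hom :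
          N.obj (toOrd (z : X)) →+ N.obj (toOrd x)) a) :=
    congrArg (fun t => fromN N x t) (toNhom_mk N x z a)
  exact h1.trans (cF_rel N z ⟨x, mem_minSet_self x⟩ (le_of_mem_minOpens z.2) a)

/-- The natural isomorphism `Res (Colim N) ≅ N`. -/
noncomputable def resColimIso :
    (Res X).obj ⟨colimF N, colimF_isCosheaf N⟩ ≅ N := by
  refine NatIso.ofComponents (fun x =>
    { hom := AddCommGrpCat.ofHom (toNhom N (show X from x))
      inv := AddCommGrpCat.ofHom (fromN N (show X from x))
      hom_inv_id := AddCommGrpCat.hom_ext (fromN_toNhom N (show X from x))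
      inv_hom_id := by
        ext a
        exact toNhom_fromN N (show X from x) a }) ?_
  intro x y f
  have hle : minOpens (show X from x) ≤ minOpens (show X from y) := leOfHom f
  have key : (toNhom N (show X from y)).comp
        ((cFmap N hle).hom : (DSU N (minOpens (show X from x)) ⧸ relSet N (minOpens (show X from x)))
          →+ (DSU N (minOpens (show X from y)) ⧸ relSet N (minOpens (show X from y))))
      = ((N.map f).hom : N.obj x →+ N.obj y).comp (toNhom N (show X from x)) := by
    refine cF_hom_ext N (fun z a => ?_)
    have l1 : ((cFmap N hle).hom : _ →+ _) (QuotientAddGroup.mk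
        (DirectSum.of (fun w : ↥(minOpens (show X from x)) => N.obj (toOrd (w : X))) z a))
        = QuotientAddGroup.mk
            (DirectSum.of (fun w : ↥(minOpens (show X from y)) => N.obj (toOrd (w : X)))
              ⟨(z : X), hle z.2⟩ a) := cFmap_mk N hle z a
    have lhs : toNhom N (show X from y) (((cFmap N hle).hom : _ →+ _)
        (QuotientAddGroup.mk
          (DirectSum.of (fun w : ↥(minOpens (show X from x)) => N.obj (toOrd (w : X))) z a)))
        = ((N.map (homOfLE (le_of_mem_minOpens (hle z.2)))).hom :
            N.obj (toOrd (z : X)) →+ N.obj (toOrd (show X from y))) a :=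
      (congrArg (fun t => toNhom N (show X from y) t) l1).trans
        (toNhom_mk N (show X from y) ⟨(z : X), hle z.2⟩ a)
    have rhs : ((N.map f).hom : N.obj x →+ N.obj y)
        (toNhom N (show X from x) (QuotientAddGroup.mk
          (DirectSum.of (fun w : ↥(minOpens (show X from x)) => N.obj (toOrd (w : X))) z a)))
        = ((N.map (homOfLE (le_of_mem_minOpens (hle z.2)))).hom :
            N.obj (toOrd (z : X)) →+ N.obj (toOrd (show X from y))) a :=
      (congrArg (fun t => ((N.map f).hom : N.obj x →+ N.obj y) t) (toNhom_mk N _ z a)).trans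
        (map_mapN N _ _ _ a)
    exact lhs.trans rhs.symm
  ext a
  exact congrFun (congrArg DFunLike.coe key) a

noncomputable instance : (Res X).EssSurj where
  mem_essImage N := ⟨⟨colimF N, colimF_isCosheaf N⟩, ⟨resColimIso N⟩⟩

noncomputable instance : (Res X).IsEquivalence where

end Iso


/-- For a finite T0 space `X`, restriction to minimal open neighbourhoods (`Res`) and the
colimit extension (`Colim`) are mutually inverse equivalences between the category of
cosheaves of abelian groups on `Open(X)` and the category of representations of `X`;
in particular there is an equivalence whose functor sends a cosheaf `F` to the
representation `x ↦ F(U_x)`. -/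
theorem stmt_14 (X : Type) [TopologicalSpace X] [Finite X] [T0Space X] :
    ∃ e : ObjectProperty.FullSubcategory (IsCosheaf (X := X)) ≌ (XOrd X ⥤ AddCommGrpCat.{0}),
      ∀ (F : ObjectProperty.FullSubcategory (IsCosheaf (X := X))) (x : XOrd X),
        (e.functor.obj F).obj x = F.obj.obj (minOpens (X := X) x) := by
  exact ⟨(Res X).asEquivalence, fun F x => rfl⟩
end
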